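/- If G_1,…,G_n are vertex-disjoint odd cycles with u_iv_i ∈ E(G_i), and G is obtained by identifying u_1,…,u_n as u and v_1,…,v_n as v, then for all m ≥ 2, P_DP(G,m) = (∏_{i=1}^n P_DP(G_i,m)) / (m(m-1))^{n-1}. -/

import Mathlib

open SimpleGraph

/-- An `m`-fold cover of a graph `G`, with lists canonically labeled by `Fin m`. -/
structure DPCover {V : Type} (G : SimpleGraph V) (m : ℕ) where
  H : SimpleGraph (V × Fin m)
  part_complete : ∀ (v : V) (a b : Fin m), a ≠ b → H.Adj (v, a) (v, b)
  cross : ∀ (u v : V) (a b : Fin m), u ≠ v → H.Adj (u, a) (v, b) → G.Adj u v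
  matching_right : ∀ (u v : V) (a b b' : Fin m), u ≠ v →
    H.Adj (u, a) (v, b) → H.Adj (u, a) (v, b') → b = b'
  matching_left : ∀ (u v : V) (a a' b : Fin m), u ≠ v →
    H.Adj (u, a) (v, b) → H.Adj (u, a') (v, b) → a = a'

/-- A cover is full if every matching between lists of adjacent vertices is perfect. -/
def DPCover.IsFull {V : Type} {G : SimpleGraph V} {m : ℕ} (C : DPCover G m) : Prop :=
  ∀ u v : V, G.Adj u v → ∀ a : Fin m, ∃ b : Fin m, C.H.Adj (u, a) (v, b)

/-- An `H`-coloring: a choice of one list element per vertex forming an independent set. -/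
def DPCover.IsColoring {V : Type} {G : SimpleGraph V} {m : ℕ} (C : DPCover G m)
    (c : V → Fin m) : Prop :=
  ∀ u v : V, ¬ C.H.Adj (u, c u) (v, c v)

/-- The number of `H`-colorings of `G` with respect to the cover `C`. -/
noncomputable def dpCount {V : Type} {G : SimpleGraph V} {m : ℕ} (C : DPCover G m) : ℕ :=
  Nat.card {c : V → Fin m // C.IsColoring c}

/-- `N(P, C)`: the number of `H`-colorings containing the set `P` of cover vertices. -/
noncomputable def NCount {V : Type} {G : SimpleGraph V} {m : ℕ} (C : DPCover G m)
    (P : Set (V × Fin m)) : ℕ :=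
  Nat.card {c : V → Fin m // C.IsColoring c ∧ ∀ p ∈ P, c p.1 = p.2}

/-- The DP color function: minimum number of colorings over all `m`-fold covers. -/
noncomputable def PDP {V : Type} (G : SimpleGraph V) (m : ℕ) : ℕ :=
  sInf {n : ℕ | ∃ C : DPCover G m, dpCount C = n}

/-- The number of proper `m`-colorings (the chromatic polynomial evaluated at `m`). -/
noncomputable def properCount {V : Type} (G : SimpleGraph V) (m : ℕ) : ℕ :=
  Nat.card {c : V → Fin m // ∀ u v : V, G.Adj u v → c u ≠ c v}

/-- A cover has a canonical labeling if lists can be renamed so all cross edges are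
`(u,j)(v,j)`. -/
def DPCover.HasCanonicalLabeling {V : Type} {G : SimpleGraph V} {m : ℕ}
    (C : DPCover G m) : Prop :=
  ∃ σ : V → Equiv.Perm (Fin m), ∀ u v : V, G.Adj u v → ∀ j : Fin m,
    C.H.Adj (u, σ u j) (v, σ v j)

/-- `G` (on vertex set `W`) is a `K_p`-gluing of the vertex-disjoint graphs `Gs i`
along the cliques `u i : Fin p → V i`, via the identification maps `φ i`. -/
structure IsCliqueGluing {n p : ℕ} {V : Fin n → Type} {W : Type}
    (Gs : ∀ i, SimpleGraph (V i)) (u : ∀ i, Fin p → V i)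
    (G : SimpleGraph W) (φ : ∀ i, V i → W) : Prop where
  phi_inj : ∀ i, Function.Injective (φ i)
  u_inj : ∀ i, Function.Injective (u i)
  clique : ∀ i (q q' : Fin p), q ≠ q' → (Gs i).Adj (u i q) (u i q')
  glue : ∀ i j q, φ i (u i q) = φ j (u j q)
  covers : ∀ w : W, ∃ i x, φ i x = w
  inter : ∀ i j x y, i ≠ j → φ i x = φ j y → ∃ q, x = u i q
  embed : ∀ i x y, G.Adj (φ i x) (φ i y) ↔ (Gs i).Adj x y
  no_extra : ∀ i j x y, i ≠ j → G.Adj (φ i x) (φ j y) →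
    (∃ q, x = u i q) ∧ (∃ q', y = u j q')


open Finset
open Fin.NatCast Fin.CommRing

attribute [local instance] Classical.propDecidable

def Efun (m : ℕ) : ℕ → ℕ
  | 0 => 0
  | j + 1 => (m - 2) * (m - 1) ^ (2 * j) + Efun m j


/-- `Efun m j = ((m-1)^(2j) - 1)/m`, the off-diagonal entry of `(J-I)^(2j)`. -/

lemma Efun_spec (M : ℕ) (j : ℕ) : (M + 2) * Efun (M + 2) j + 1 = (M + 1) ^ (2 * j) := by
  induction j with
  | zero => simp [Efun]
  | succ j ih =>
    have : 2 * (j + 1) = 2 * j + 2 := by ring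
    rw [this, Efun]
    simp only [show M + 2 - 2 = M from rfl, show M + 2 - 1 = M + 1 from rfl] at *
    have e2 : (M + 1) ^ (2 * j + 2) = (M + 1) ^ (2 * j) * (M + 1) ^ 2 := by ring
    nlinarith [ih, e2]

lemma Efun_le (M : ℕ) (j : ℕ) : Efun (M + 2) j ≤ (M + 1) ^ (2 * j) := by
  have := Efun_spec M j
  nlinarith [this]

lemma Efun_succ' (M : ℕ) (j : ℕ) :
    Efun (M + 2) (j + 1) = (M + 1) ^ 2 * Efun (M + 2) j + M := by
  have h := Efun_spec M j
  show (M + 2 - 2) * (M + 2 - 1) ^ (2 * j) + Efun (M + 2) j = _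
  simp only [show M + 2 - 2 = M from rfl, show M + 2 - 1 = M + 1 from rfl]
  nlinarith [h]

/-- Transfer "matrix" recursion: `vec F a t b` is the number of sequences
`a = c₀, c₁, …, c_t = b` with `¬ F e (c_e) (c_{e+1})` for all `e < t`. -/
noncomputable def vec {m : ℕ} (F : ℕ → Fin m → Fin m → Prop) (a : Fin m) : ℕ → Fin m → ℕ
  | 0, b => if b = a then 1 else 0
  | t + 1, b => ∑ c, if F t c b then 0 else vec F a t c

lemma sum_ite_zero_filter {m : ℕ} (P : Fin m → Prop) (x : Fin m → ℕ) :
    ∑ c, (if P c then 0 else x c) = ∑ c ∈ univ.filter (fun c => ¬ P c), x c := by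
  rw [Finset.sum_ite, Finset.sum_const_zero, zero_add]

lemma sum_ite_zero_const {m : ℕ} (P : Fin m → Prop) (k : ℕ) :
    ∑ c, (if P c then 0 else k) = (univ.filter (fun c => ¬ P c)).card * k := by
  rw [sum_ite_zero_filter, Finset.sum_const, smul_eq_mul]

/-- One step of the recursion multiplies the total sum by at least `m - 1`. -/
lemma step_sum {M : ℕ} (F : Fin (M + 2) → Fin (M + 2) → Prop)
    (hFr : ∀ c b b', F c b → F c b' → b = b') (x : Fin (M + 2) → ℕ) :
    (M + 1) * (∑ c, x c) ≤ ∑ b, ∑ c, (if F c b then 0 else x c) := by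
  rw [Finset.sum_comm]
  rw [Finset.mul_sum]
  apply Finset.sum_le_sum
  intro c _
  rw [sum_ite_zero_const]
  have h1 : (univ.filter (fun b => F c b)).card ≤ 1 := by
    apply Finset.card_le_one.mpr
    intro b hb b' hb'
    simp only [mem_filter] at hb hb'
    exact hFr c b b' hb.2 hb'.2
  have h2 : (univ.filter (fun b => F c b)).card
      + (univ.filter (fun b => ¬ F c b)).card = M + 2 := by
    rw [Finset.card_filter_add_card_filter_not]
    simp
  have : M + 1 ≤ (univ.filter (fun b => ¬ F c b)).card := by omega
  exact Nat.mul_le_mul_right _ this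

/-- Key refined bound: the new value at any coordinate `c₀` is at least `M * S + E`
below the new total sum. -/
lemma key_bound {M : ℕ} (F : Fin (M + 2) → Fin (M + 2) → Prop)
    (hFr : ∀ c b b', F c b → F c b' → b = b')
    (hFl : ∀ c c' b, F c b → F c' b → c = c')
    (x : Fin (M + 2) → ℕ) (E S : ℕ) (hx : ∀ c, E ≤ x c) (hS : S ≤ ∑ c, x c)
    (c₀ : Fin (M + 2)) :
    (∑ c, (if F c c₀ then 0 else x c)) + (M * S + E)
      ≤ ∑ b, ∑ c, (if F c b then 0 else x c) := by
  set s := ∑ c, x c with hs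
  have hstep := step_sum F hFr x
  by_cases htgt : ∃ c₁, F c₁ c₀
  · obtain ⟨c₁, hc₁⟩ := htgt
    have hfilter : univ.filter (fun c => F c c₀) = {c₁} := by
      ext c
      simp only [mem_filter, mem_univ, true_and, mem_singleton]
      exact ⟨fun hc => hFl c c₁ c₀ hc hc₁, fun hc => hc ▸ hc₁⟩
    have hcompl : univ.filter (fun c => ¬ F c c₀) = univ.erase c₁ := by
      ext c
      simp only [mem_filter, mem_univ, true_and, mem_erase]
      constructor
      · intro hc; exact ⟨fun hcc => hc (hcc ▸ hc₁), trivial⟩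
      · intro hc hcF; exact hc.1 (hFl c c₁ c₀ hcF hc₁)
    rw [sum_ite_zero_filter, hcompl]
    have hsplit : (∑ c ∈ univ.erase c₁, x c) + x c₁ = s := Finset.sum_erase_add _ _ (mem_univ c₁)
    have h1 : (∑ c ∈ univ.erase c₁, x c) + (M * S + E) ≤ (M + 1) * s := by
      have hMS : M * S ≤ M * s := Nat.mul_le_mul_left M hS
      have hE : E ≤ x c₁ := hx c₁
      nlinarith [hsplit]
    exact h1.trans hstep
  · -- `c₀` is not a target, so its value is the full sum `s`, but then the matching
    -- is not surjective and the new total sum exceeds `(M+1) * s` by at least `E`.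
    have hcompl : univ.filter (fun c => ¬ F c c₀) = univ := by
      apply Finset.filter_true_of_mem
      intro c _ ; exact fun hc => htgt ⟨c, hc⟩
    have hyc₀ : (∑ c, (if F c c₀ then 0 else x c)) = s := by
      rw [sum_ite_zero_filter, hcompl]
    rw [hyc₀]
    -- the set of sources
    set Src := univ.filter (fun c => ∃ b', F c b') with hSrc
    have hSrcCard : Src.card ≤ M + 1 := by
      have : Src.card ≤ (univ.erase c₀).card := by
        apply Finset.card_le_card_of_injOn (fun c => if h : ∃ b', F c b' then h.choose else c)
        · intro c hc
          simp only [hSrc, Finset.mem_coe, mem_filter, mem_univ, true_and] at hc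
          dsimp only
          rw [dif_pos hc, Finset.mem_coe]
          simp only [mem_erase, mem_univ, and_true]
          intro hEq
          exact htgt ⟨c, hEq ▸ hc.choose_spec⟩
        · intro c hc c' hc' hEq
          simp only [hSrc, coe_filter, Set.mem_setOf_eq, mem_univ, true_and] at hc hc'
          dsimp only at hEq
          rw [dif_pos hc, dif_pos hc'] at hEq
          exact hFl c c' _ (hEq ▸ hc.choose_spec) hc'.choose_spec
      have : (univ.erase c₀).card = M + 1 := by
        rw [Finset.card_erase_of_mem (mem_univ c₀)]
        simp
      omega
    have hex : ∃ c, c ∉ Src := by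
      by_contra hco
      push_neg at hco
      have : Src = univ := Finset.eq_univ_iff_forall.mpr hco
      rw [this] at hSrcCard
      simp at hSrcCard
    obtain ⟨cs, hcs⟩ := hex
    -- compute the new total sum exactly, splitting by membership in Src
    have hsum : ∀ c : Fin (M + 2),
        (M + 1) * x c + (if c ∈ Src then 0 else x c)
          ≤ ∑ b, (if F c b then 0 else x c) := by
      intro c
      rw [sum_ite_zero_const]
      by_cases hc : c ∈ Src
      · rw [if_pos hc]
        have h1 : (univ.filter (fun b => F c b)).card ≤ 1 := by
          apply Finset.card_le_one.mpr
          intro b hb b' hb'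
          simp only [mem_filter] at hb hb'
          exact hFr c b b' hb.2 hb'.2
        have h2 : (univ.filter (fun b => F c b)).card
            + (univ.filter (fun b => ¬ F c b)).card = M + 2 := by
          rw [Finset.card_filter_add_card_filter_not]; simp
        have : M + 1 ≤ (univ.filter (fun b => ¬ F c b)).card := by omega
        calc (M+1) * x c + 0 = (M+1) * x c := by ring
        _ ≤ _ := Nat.mul_le_mul_right _ this
      · rw [if_neg hc]
        have hnb : ∀ b, ¬ F c b := by
          intro b hb
          exact hc (by simp [hSrc]; exact ⟨b, hb⟩)
        have : univ.filter (fun b => ¬ F c b) = univ := by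
          apply Finset.filter_true_of_mem; intro b _; exact hnb b
        rw [this]
        have : (univ : Finset (Fin (M+2))).card = M + 2 := by simp
        rw [this]
        nlinarith []
    have htotal : (M + 1) * s + E ≤ ∑ b, ∑ c, (if F c b then 0 else x c) := by
      rw [Finset.sum_comm]
      calc (M + 1) * s + E
          = (∑ c, (M + 1) * x c) + E := by rw [Finset.mul_sum]
        _ ≤ (∑ c, (M + 1) * x c) + ∑ c, (if c ∈ Src then 0 else x c) := by
            gcongr
            calc E ≤ x cs := hx cs
              _ = (if cs ∈ Src then 0 else x cs) := by rw [if_neg hcs]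
              _ ≤ ∑ c, (if c ∈ Src then 0 else x c) := by
                  apply Finset.single_le_sum (f := fun c => if c ∈ Src then 0 else x c)
                  · intro c _; positivity
                  · exact mem_univ cs
        _ = ∑ c, ((M + 1) * x c + (if c ∈ Src then 0 else x c)) := by
            rw [Finset.sum_add_distrib]
        _ ≤ _ := Finset.sum_le_sum (fun c _ => hsum c)
    have hMs : M * S + E ≤ M * s + E := by
      have := Nat.mul_le_mul_left M hS; omega
    calc s + (M * S + E) ≤ s + (M * s + E) := by omega
      _ = (M + 1) * s + E := by ring
      _ ≤ _ := htotal

lemma vec_zero {m : ℕ} (F : ℕ → Fin m → Fin m → Prop) (a b : Fin m) :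
    vec F a 0 b = if b = a then 1 else 0 := rfl

lemma vec_succ {m : ℕ} (F : ℕ → Fin m → Fin m → Prop) (a : Fin m) (t : ℕ) (b : Fin m) :
    vec F a (t + 1) b = ∑ c, if F t c b then 0 else vec F a t c := rfl

/-- The main per-path lower bound: after an even number `2j` of steps, every
entry is at least `Efun m j` and the total sum is at least `(m-1)^(2j)`. -/
lemma vec_bound {M : ℕ} (F : ℕ → Fin (M + 2) → Fin (M + 2) → Prop) (j : ℕ)
    (hFr : ∀ e, e < 2 * j → ∀ c b b', F e c b → F e c b' → b = b')
    (hFl : ∀ e, e < 2 * j → ∀ c c' b, F e c b → F e c' b → c = c')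
    (a : Fin (M + 2)) :
    (∀ b, Efun (M + 2) j ≤ vec F a (2 * j) b) ∧
      (M + 1) ^ (2 * j) ≤ ∑ b, vec F a (2 * j) b := by
  induction j with
  | zero =>
    constructor
    · intro b; simp [Efun]
    · simp only [Nat.mul_zero, pow_zero, vec_zero]
      rw [Finset.sum_ite_eq' univ a (fun _ => 1)]
      simp
  | succ j ih =>
    obtain ⟨hx, hs⟩ := ih (fun e he => hFr e (by omega)) (fun e he => hFl e (by omega))
    have hFr2j := hFr (2 * j) (by omega)
    have hFl2j := hFl (2 * j) (by omega)
    have hFr2j1 := hFr (2 * j + 1) (by omega)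
    have hFl2j1 := hFl (2 * j + 1) (by omega)
    have h21 : 2 * (j + 1) = (2 * j + 1) + 1 := by ring
    set x := vec F a (2 * j) with hxdef
    set y := vec F a (2 * j + 1) with hydef
    have hy : ∀ b, y b = ∑ c, if F (2 * j) c b then 0 else x c := fun b => rfl
    have hz : ∀ b, vec F a (2 * (j + 1)) b = ∑ c, if F (2 * j + 1) c b then 0 else y c := by
      intro b; rw [h21]; rfl
    have hEs : Efun (M + 2) (j + 1) = M * (M + 1) ^ (2 * j) + Efun (M + 2) j := rfl
    have hsy : (M + 1) * ((M + 1) ^ (2 * j)) ≤ ∑ b, y b := by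
      calc (M + 1) * ((M + 1) ^ (2 * j)) ≤ (M + 1) * ∑ c, x c := Nat.mul_le_mul_left _ hs
        _ ≤ ∑ b, ∑ c, if F (2 * j) c b then 0 else x c := step_sum _ hFr2j x
        _ = ∑ b, y b := by simp only [hy]
    constructor
    · intro b
      rw [hz b, hEs]
      -- the (at most one) forbidden source for `b` at step `2j+1`
      by_cases hb : ∃ c₀, F (2 * j + 1) c₀ b
      · obtain ⟨c₀, hc₀⟩ := hb
        have hfilter : univ.filter (fun c => ¬ F (2 * j + 1) c b) = univ.erase c₀ := by
          ext c
          simp only [mem_filter, mem_univ, true_and, mem_erase, and_true]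
          constructor
          · intro hc hcc; exact hc (hcc ▸ hc₀)
          · intro hc hcF; exact hc (hFl2j1 c c₀ b hcF hc₀)
        rw [sum_ite_zero_filter, hfilter]
        have hsplit : (∑ c ∈ univ.erase c₀, y c) + y c₀ = ∑ c, y c :=
          Finset.sum_erase_add _ _ (mem_univ c₀)
        have hkey : y c₀ + (M * (M + 1) ^ (2 * j) + Efun (M + 2) j) ≤ ∑ c, y c := by
          rw [hy c₀]
          have := key_bound (F (2 * j)) hFr2j hFl2j x
            (Efun (M + 2) j) ((M + 1) ^ (2 * j)) hx hs c₀
          calc (∑ c, if F (2 * j) c c₀ then 0 else x c)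
                + (M * (M + 1) ^ (2 * j) + Efun (M + 2) j)
              ≤ ∑ b', ∑ c, if F (2 * j) c b' then 0 else x c := this
            _ = ∑ c, y c := by simp only [hy]
        omega
      · push_neg at hb
        have hfilter : univ.filter (fun c => ¬ F (2 * j + 1) c b) = univ :=
          Finset.filter_true_of_mem (fun c _ => hb c)
        rw [sum_ite_zero_filter, hfilter]
        have hEle := Efun_le M j
        calc M * (M + 1) ^ (2 * j) + Efun (M + 2) j
            ≤ M * (M + 1) ^ (2 * j) + (M + 1) ^ (2 * j) := by omega
          _ = (M + 1) * (M + 1) ^ (2 * j) := by ring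
          _ ≤ ∑ c, y c := hsy
    · have : ∑ b, vec F a (2 * (j + 1)) b
          = ∑ b, ∑ c, if F (2 * j + 1) c b then 0 else y c := by
        apply Finset.sum_congr rfl; intro b _; exact hz b
      rw [this]
      calc (M + 1) ^ (2 * (j + 1)) = (M + 1) * ((M + 1) * (M + 1) ^ (2 * j)) := by ring
        _ ≤ (M + 1) * ∑ b, y b := Nat.mul_le_mul_left _ hsy
        _ ≤ _ := step_sum _ hFr2j1 y

lemma sum_erase_ite_one {M : ℕ} (b a : Fin (M + 2)) :
    ∑ c ∈ univ.erase b, (if c = a then (1:ℕ) else 0) = if b = a then 0 else 1 := by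
  rw [Finset.sum_ite_eq' (univ.erase b) a (fun _ => 1)]
  by_cases hba : b = a
  · subst hba; simp
  · simp [Finset.mem_erase, Ne.symm hba, hba]

lemma sum_erase_ite_one' {M : ℕ} (b a : Fin (M + 2)) :
    ∑ c ∈ univ.erase b, (if c = a then (0:ℕ) else 1) = if b = a then M + 1 else M := by
  have h1 : ∀ c : Fin (M+2), (if c = a then (0:ℕ) else 1) + (if c = a then 1 else 0) = 1 := by
    intro c; by_cases h : c = a <;> simp [h]
  have h2 : (∑ c ∈ univ.erase b, (if c = a then (0:ℕ) else 1))
      + ∑ c ∈ univ.erase b, (if c = a then (1:ℕ) else 0) = M + 1 := by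
    rw [← Finset.sum_add_distrib]
    rw [Finset.sum_congr rfl (fun c _ => h1 c), Finset.sum_const, smul_eq_mul, mul_one]
    rw [Finset.card_erase_of_mem (mem_univ b)]
    simp
  rw [sum_erase_ite_one] at h2
  by_cases hba : b = a <;> simp [hba] at h2 ⊢ <;> omega

/-- Exact values of `vec` for identity matchings. -/
lemma vec_id {M : ℕ} (F : ℕ → Fin (M + 2) → Fin (M + 2) → Prop) (a : Fin (M + 2)) (j : ℕ)
    (hid : ∀ e, e < 2 * j → ∀ c b', F e c b' ↔ c = b') (b : Fin (M + 2)) :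
    vec F a (2 * j) b = Efun (M + 2) j + if b = a then 1 else 0 := by
  induction j generalizing b with
  | zero => simp [Efun, vec_zero]
  | succ j ih =>
    have ihx : ∀ b, vec F a (2 * j) b = Efun (M + 2) j + if b = a then 1 else 0 :=
      fun b => ih (fun e he => hid e (by omega)) b
    have h21 : 2 * (j + 1) = (2 * j + 1) + 1 := by ring
    set x := vec F a (2 * j) with hxdef
    set y := vec F a (2 * j + 1) with hydef
    have hy : ∀ b, y b = ∑ c ∈ univ.erase b, x c := by
      intro b
      have : y b = ∑ c, if F (2 * j) c b then 0 else x c := rfl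
      rw [this, sum_ite_zero_filter]
      congr 1
      ext c
      simp only [mem_filter, mem_univ, true_and, mem_erase, and_true]
      rw [hid (2 * j) (by omega) c b]
    have hyval : ∀ b, y b = (M + 1) * Efun (M + 2) j + if b = a then 0 else 1 := by
      intro b
      rw [hy b]
      calc ∑ c ∈ univ.erase b, x c
          = ∑ c ∈ univ.erase b, (Efun (M + 2) j + if c = a then 1 else 0) := by
            exact Finset.sum_congr rfl (fun c _ => ihx c)
        _ = (univ.erase b).card * Efun (M + 2) j
            + ∑ c ∈ univ.erase b, (if c = a then 1 else 0) := by
            rw [Finset.sum_add_distrib, Finset.sum_const, smul_eq_mul]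
        _ = (M + 1) * Efun (M + 2) j + if b = a then 0 else 1 := by
            rw [sum_erase_ite_one, Finset.card_erase_of_mem (mem_univ b)]
            simp
    have hz : vec F a (2 * (j + 1)) b = ∑ c ∈ univ.erase b, y c := by
      rw [h21]
      have : vec F a ((2 * j + 1) + 1) b = ∑ c, if F (2 * j + 1) c b then 0 else y c := rfl
      rw [this, sum_ite_zero_filter]
      congr 1
      ext c
      simp only [mem_filter, mem_univ, true_and, mem_erase, and_true]
      rw [hid (2 * j + 1) (by omega) c b]
    rw [hz]
    calc ∑ c ∈ univ.erase b, y c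
        = ∑ c ∈ univ.erase b, ((M + 1) * Efun (M + 2) j + if c = a then 0 else 1) :=
          Finset.sum_congr rfl (fun c _ => hyval c)
      _ = (univ.erase b).card * ((M + 1) * Efun (M + 2) j)
          + ∑ c ∈ univ.erase b, (if c = a then 0 else 1) := by
          rw [Finset.sum_add_distrib, Finset.sum_const, smul_eq_mul]
      _ = (M + 1) * ((M + 1) * Efun (M + 2) j) + if b = a then M + 1 else M := by
          rw [sum_erase_ite_one', Finset.card_erase_of_mem (mem_univ b)]
          simp
      _ = Efun (M + 2) (j + 1) + if b = a then 1 else 0 := by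
          rw [Efun_succ' M j]
          by_cases hba : b = a <;> simp [hba] <;> ring

def PathProp {m : ℕ} (F : ℕ → Fin m → Fin m → Prop) (t : ℕ) (a b : Fin m)
    (g : Fin (t + 1) → Fin m) : Prop :=
  g 0 = a ∧ g (Fin.last t) = b ∧ ∀ e : Fin t, ¬ F e.val (g e.castSucc) (g e.succ)

lemma nat_card_sigma {ι : Type*} [Fintype ι] (β : ι → Type*) [∀ i, Finite (β i)] :
    Nat.card (Σ i, β i) = ∑ i, Nat.card (β i) := by
  letI : ∀ i, Fintype (β i) := fun i => Fintype.ofFinite _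
  simp [Nat.card_eq_fintype_card, Fintype.card_sigma]

lemma nat_card_partition {α : Type*} [Fintype α] (P : α → Prop) {ι : Type*} [Fintype ι]
    (f : α → ι) : Nat.card {x // P x} = ∑ i, Nat.card {x // P x ∧ f x = i} := by
  simp only [Nat.card_eq_fintype_card, Fintype.card_subtype]
  rw [Finset.card_eq_sum_card_fiberwise (f := f) (t := univ) (fun x _ => mem_univ _)]
  apply Finset.sum_congr rfl
  intro i _
  rw [Finset.filter_filter]

lemma card_path {m : ℕ} (F : ℕ → Fin m → Fin m → Prop) (t : ℕ) (a : Fin m) :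
    ∀ b, Nat.card {g : Fin (t + 1) → Fin m // PathProp F t a b g} = vec F a t b := by
  induction t with
  | zero =>
    intro b
    have he : {g : Fin 1 → Fin m // PathProp F 0 a b g} ≃ {c : Fin m // c = a ∧ c = b} :=
      { toFun := fun g => ⟨g.1 0, g.2.1, g.2.2.1⟩
        invFun := fun c => ⟨fun _ => c.1, c.2.1, c.2.2, fun e => e.elim0⟩
        left_inv := fun g => by
          apply Subtype.ext; funext i
          have : i = 0 := Subsingleton.elim _ _
          rw [this]
        right_inv := fun c => rfl }
    rw [Nat.card_congr he, vec_zero]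
    rw [Nat.card_eq_fintype_card, Fintype.card_subtype]
    by_cases hba : b = a
    · subst hba
      have : univ.filter (fun c : Fin m => c = b ∧ c = b) = {b} := by
        ext c; simp [and_self]
      rw [this]; simp
    · have : univ.filter (fun c : Fin m => c = a ∧ c = b) = ∅ := by
        ext c
        simp only [mem_filter, mem_univ, true_and, notMem_empty, iff_false, not_and]
        rintro rfl h; exact hba h.symm
      rw [this]; simp [hba]
  | succ t ih =>
    intro b
    rw [nat_card_partition _ (fun g => g ((Fin.last t).castSucc)), vec_succ]
    apply Finset.sum_congr rfl
    intro c _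
    have he : {g : Fin (t + 2) → Fin m //
        PathProp F (t + 1) a b g ∧ g ((Fin.last t).castSucc) = c}
        ≃ {g : Fin (t + 1) → Fin m // PathProp F t a c g ∧ ¬ F t c b} :=
      { toFun := fun gp => ⟨Fin.init gp.1, by
          obtain ⟨⟨h0, hl, he⟩, hc⟩ := gp.2
          refine ⟨⟨?_, ?_, ?_⟩, ?_⟩
          · show gp.1 (Fin.castSucc 0) = a
            rwa [Fin.castSucc_zero]
          · show gp.1 ((Fin.last t).castSucc) = c
            exact hc
          · intro e
            have := he e.castSucc
            rw [Fin.succ_castSucc] at this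
            exact this
          · have := he (Fin.last t)
            rw [Fin.succ_last] at this
            rw [Fin.val_last] at this
            rw [hc, hl] at this
            exact this⟩
        invFun := fun gp => ⟨Fin.snoc gp.1 b, by
          obtain ⟨⟨h0, hl, he⟩, hF⟩ := gp.2
          refine ⟨⟨?_, ?_, ?_⟩, ?_⟩
          · rw [show (0 : Fin (t + 2)) = Fin.castSucc 0 by simp, Fin.snoc_castSucc]
            exact h0
          · rw [Fin.snoc_last]
          · intro e
            refine Fin.lastCases ?_ ?_ e
            · rw [Fin.succ_last, Fin.snoc_last, Fin.snoc_castSucc, Fin.val_last, hl]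
              exact hF
            · intro e'
              rw [Fin.succ_castSucc, Fin.snoc_castSucc, Fin.snoc_castSucc,
                Fin.coe_castSucc]
              exact he e'
          · rw [Fin.snoc_castSucc]
            exact hl⟩
        left_inv := fun gp => by
          apply Subtype.ext
          show Fin.snoc (Fin.init gp.1) b = gp.1
          have hb : gp.1 (Fin.last (t + 1)) = b := gp.2.1.2.1
          have h2 : Fin.snoc (Fin.init gp.1) (gp.1 (Fin.last (t + 1))) = gp.1 :=
            Fin.snoc_init_self gp.1
          rw [hb] at h2
          exact h2
        right_inv := fun gp => Subtype.ext (@Fin.init_snoc (t + 1) (fun _ => Fin m) b gp.1) }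
    rw [Nat.card_congr he]
    by_cases hF : F t c b
    · rw [if_pos hF]
      have : IsEmpty {g : Fin (t + 1) → Fin m // PathProp F t a c g ∧ ¬ F t c b} :=
        ⟨fun gp => gp.2.2 hF⟩
      exact Nat.card_of_isEmpty
    · rw [if_neg hF]
      rw [Nat.card_congr (Equiv.subtypeEquivRight (fun g => and_iff_left hF))]
      exact ih c



section Glue

open SimpleGraph

variable {m : ℕ} {W : Type} {I : Type} {G : SimpleGraph W} {t : I → ℕ} {u v : W}
  {w : ∀ i : I, ℕ → W}

/-- The combinatorial structure of several internally-disjoint `u,v`-paths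
(of lengths `t i`) together with the edge `uv`. -/
structure GlueSetup (G : SimpleGraph W) (t : I → ℕ) (u v : W) (w : ∀ i : I, ℕ → W) :
    Prop where
  w_zero : ∀ i, w i 0 = u
  w_last : ∀ i, w i (t i) = v
  w_inj : ∀ i e f, e ≤ t i → f ≤ t i → w i e = w i f → e = f
  w_cross : ∀ i j e f, i ≠ j → e ≤ t i → f ≤ t j → w i e = w j f →
    (e = 0 ∧ f = 0) ∨ (e = t i ∧ f = t j)
  w_cover : ∀ x : W, ∃ i e, e ≤ t i ∧ w i e = x
  adj_iff : ∀ x y, G.Adj x y ↔ ((x = u ∧ y = v) ∨ (x = v ∧ y = u) ∨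
    ∃ i e, e + 1 ≤ t i ∧ ((x = w i e ∧ y = w i (e + 1)) ∨ (y = w i e ∧ x = w i (e + 1))))

lemma GlueSetup.adj_uv (S : GlueSetup G t u v w) : G.Adj u v :=
  (S.adj_iff u v).2 (Or.inl ⟨rfl, rfl⟩)

lemma GlueSetup.ne_uv (S : GlueSetup G t u v w) : u ≠ v :=
  S.adj_uv.ne

/-- Reassemble a coloring of `G` from colorings of the paths. -/
noncomputable def colFn (S : GlueSetup G t u v w)
    (g : ∀ i, Fin (t i + 1) → Fin m) : W → Fin m :=
  fun x => g (S.w_cover x).choose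
    ⟨(S.w_cover x).choose_spec.choose,
      Nat.lt_succ_of_le (S.w_cover x).choose_spec.choose_spec.1⟩

lemma colFn_eq (S : GlueSetup G t u v w) (g : ∀ i, Fin (t i + 1) → Fin m)
    (a b : Fin m) (hA : ∀ i, g i 0 = a) (hB : ∀ i, g i (Fin.last (t i)) = b)
    (i : I) (e : ℕ) (he : e ≤ t i) :
    colFn S g (w i e) = g i ⟨e, Nat.lt_succ_of_le he⟩ := by
  have hex : ∃ j, ∃ f, ∃ hj : f ≤ t j, w j f = w i e ∧
      colFn S g (w i e) = g j ⟨f, Nat.lt_succ_of_le hj⟩ :=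
    ⟨_, _, (S.w_cover (w i e)).choose_spec.choose_spec.1,
      (S.w_cover (w i e)).choose_spec.choose_spec.2, rfl⟩
  obtain ⟨j, f, hjf, hwjf, hcol⟩ := hex
  rw [hcol]
  by_cases hij : j = i
  · subst hij
    have hfe : f = e := S.w_inj j f e hjf he hwjf
    subst hfe
    rfl
  · rcases S.w_cross j i f e hij hjf he hwjf with ⟨hf0, he0⟩ | ⟨hft, het⟩
    · have h1 : (⟨f, Nat.lt_succ_of_le hjf⟩ : Fin (t j + 1)) = 0 := Fin.ext (by simp [hf0])
      have h2 : (⟨e, Nat.lt_succ_of_le he⟩ : Fin (t i + 1)) = 0 := Fin.ext (by simp [he0])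
      rw [h1, h2, hA j, hA i]
    · have h1 : (⟨f, Nat.lt_succ_of_le hjf⟩ : Fin (t j + 1)) = Fin.last (t j) :=
        Fin.ext (by simp [hft])
      have h2 : (⟨e, Nat.lt_succ_of_le he⟩ : Fin (t i + 1)) = Fin.last (t i) :=
        Fin.ext (by simp [het])
      rw [h1, h2, hB j, hB i]

lemma isColoring_colFn [Nonempty I] (S : GlueSetup G t u v w) (C : DPCover G m)
    (a b : Fin m) (g : ∀ i, Fin (t i + 1) → Fin m)
    (hAdj : ¬ C.H.Adj (u, a) (v, b))
    (hPath : ∀ i, PathProp (fun e c d => C.H.Adj (w i e, c) (w i (e + 1), d))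
      (t i) a b (g i)) :
    C.IsColoring (colFn S g) := by
  have hA : ∀ i, g i 0 = a := fun i => (hPath i).1
  have hB : ∀ i, g i (Fin.last (t i)) = b := fun i => (hPath i).2.1
  have i₀ : I := Classical.arbitrary I
  have hzero : ∀ i, (⟨0, Nat.lt_succ_of_le (Nat.zero_le (t i))⟩ : Fin (t i + 1)) = 0 :=
    fun i => Fin.ext (by simp)
  have hlast : ∀ i, (⟨t i, Nat.lt_succ_of_le le_rfl⟩ : Fin (t i + 1)) = Fin.last (t i) :=
    fun i => Fin.ext (by simp)
  have hu : colFn S g u = a := by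
    have h := colFn_eq S g a b hA hB i₀ 0 (Nat.zero_le _)
    rw [S.w_zero i₀] at h
    rw [h, hzero, hA]
  have hv : colFn S g v = b := by
    have h := colFn_eq S g a b hA hB i₀ (t i₀) le_rfl
    rw [S.w_last i₀] at h
    rw [h, hlast, hB]
  intro x y
  by_cases hxy : x = y
  · subst hxy
    exact fun h => C.H.loopless.irrefl _ h
  by_cases hadj : G.Adj x y
  · rcases (S.adj_iff x y).1 hadj with ⟨hx, hy⟩ | ⟨hx, hy⟩ | ⟨i, e, he, ⟨hx, hy⟩ | ⟨hy, hx⟩⟩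
    · subst hx; subst hy
      rw [hu, hv]; exact hAdj
    · subst hx; subst hy
      rw [hu, hv]
      intro hH; exact hAdj hH.symm
    · subst hx; subst hy
      rw [colFn_eq S g a b hA hB i e (Nat.le_of_succ_le he),
        colFn_eq S g a b hA hB i (e + 1) he]
      exact (hPath i).2.2 ⟨e, he⟩
    · subst hx; subst hy
      rw [colFn_eq S g a b hA hB i e (Nat.le_of_succ_le he),
        colFn_eq S g a b hA hB i (e + 1) he]
      intro hH
      exact (hPath i).2.2 ⟨e, he⟩ hH.symm
  · intro hH
    exact hadj (C.cross x y _ _ hxy hH)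

theorem glue_decomp [Fintype W] [Fintype I] [Nonempty I] (S : GlueSetup G t u v w)
    (C : DPCover G m) :
    dpCount C = ∑ a : Fin m, ∑ b : Fin m,
      if C.H.Adj (u, a) (v, b) then 0
      else ∏ i, vec (fun e c d => C.H.Adj (w i e, c) (w i (e + 1), d)) a (t i) b := by
  classical
  have E : {c : W → Fin m // C.IsColoring c} ≃
      Σ ab : Fin m × Fin m, {g : ∀ i, Fin (t i + 1) → Fin m //
        (¬ C.H.Adj (u, ab.1) (v, ab.2)) ∧
        ∀ i, PathProp (fun e c d => C.H.Adj (w i e, c) (w i (e + 1), d))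
          (t i) ab.1 ab.2 (g i)} :=
    { toFun := fun c => ⟨(c.1 u, c.1 v), ⟨fun i e => c.1 (w i (e : ℕ)), by
        refine ⟨c.2 u v, fun i => ⟨?_, ?_, ?_⟩⟩
        · exact congrArg c.1 (by rw [Fin.val_zero, S.w_zero i])
        · exact congrArg c.1 (by rw [Fin.val_last, S.w_last i])
        · intro e
          exact c.2 (w i (e : ℕ)) (w i ((e : ℕ) + 1))⟩⟩
      invFun := fun p => ⟨colFn S p.2.1,
        isColoring_colFn S C p.1.1 p.1.2 p.2.1 p.2.2.1 p.2.2.2⟩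
      left_inv := fun c => by
        apply Subtype.ext
        funext x
        have h1 : colFn S (fun i e => c.1 (w i (e : ℕ))) x
            = c.1 (w (S.w_cover x).choose (S.w_cover x).choose_spec.choose) := rfl
        exact h1.trans (congrArg c.1 ((S.w_cover x).choose_spec.choose_spec.2))
      right_inv := fun p => by
        obtain ⟨⟨a, b⟩, g, hAdj, hPath⟩ := p
        have hA : ∀ i, g i 0 = a := fun i => (hPath i).1
        have hB : ∀ i, g i (Fin.last (t i)) = b := fun i => (hPath i).2.1
        have hzero : (⟨0, Nat.lt_succ_of_le (Nat.zero_le (t (Classical.arbitrary I)))⟩ :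
            Fin (t (Classical.arbitrary I) + 1)) = 0 := Fin.ext (by simp)
        have hlast : (⟨t (Classical.arbitrary I), Nat.lt_succ_of_le le_rfl⟩ :
            Fin (t (Classical.arbitrary I) + 1)) = Fin.last _ := Fin.ext (by simp)
        have hu : colFn S g u = a := by
          have h := colFn_eq S g a b hA hB (Classical.arbitrary I) 0 (Nat.zero_le _)
          rw [S.w_zero] at h
          rw [h, hzero]
          exact hA _
        have hv : colFn S g v = b := by
          have h := colFn_eq S g a b hA hB (Classical.arbitrary I) (t _) le_rfl
          rw [S.w_last] at h
          rw [h, hlast]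
          exact hB _
        have hg : (fun i (e : Fin (t i + 1)) => colFn S g (w i (e : ℕ))) = g := by
          funext i e
          rw [colFn_eq S g a b hA hB i (e : ℕ) (Nat.le_of_lt_succ e.isLt)]
        subst hu
        subst hv
        exact congrArg (Sigma.mk _) (Subtype.ext hg) }
  rw [show dpCount C = Nat.card {c : W → Fin m // C.IsColoring c} from rfl,
    Nat.card_congr E, nat_card_sigma, Fintype.sum_prod_type]
  apply Finset.sum_congr rfl
  intro a _
  apply Finset.sum_congr rfl
  intro b _
  by_cases hAdj : C.H.Adj (u, a) (v, b)
  · rw [if_pos hAdj]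
    have : IsEmpty {g : ∀ i, Fin (t i + 1) → Fin m //
        (¬ C.H.Adj (u, a) (v, b)) ∧
        ∀ i, PathProp (fun e c d => C.H.Adj (w i e, c) (w i (e + 1), d)) (t i) a b (g i)} :=
      ⟨fun q => q.2.1 hAdj⟩
    exact Nat.card_of_isEmpty
  · rw [if_neg hAdj]
    rw [Nat.card_congr (Equiv.subtypeEquivRight (fun g => and_iff_right hAdj))]
    rw [Nat.card_congr (Equiv.subtypePiEquivPi), Nat.card_pi]
    exact Finset.prod_congr rfl (fun i _ => card_path _ (t i) a b)

lemma glue_matching {M : ℕ} (S : GlueSetup G t u v w) (C : DPCover G (M + 2)) (i : I) :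
    (∀ e, e < t i → ∀ c b b', C.H.Adj (w i e, c) (w i (e + 1), b) →
        C.H.Adj (w i e, c) (w i (e + 1), b') → b = b') ∧
    (∀ e, e < t i → ∀ c c' b, C.H.Adj (w i e, c) (w i (e + 1), b) →
        C.H.Adj (w i e, c') (w i (e + 1), b) → c = c') := by
  have hne : ∀ e, e < t i → w i e ≠ w i (e + 1) := by
    intro e he hEq
    have := S.w_inj i e (e + 1) (by omega) (by omega) hEq
    omega
  exact ⟨fun e he c b b' h1 h2 => C.matching_right _ _ c b b' (hne e he) h1 h2,
    fun e he c c' b h1 h2 => C.matching_left _ _ c c' b (hne e he) h1 h2⟩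

lemma glue_lower {M : ℕ} [Fintype W] [Fintype I] [Nonempty I]
    {κ : I → ℕ} (ht : ∀ i, t i = 2 * κ i) (S : GlueSetup G t u v w)
    (C : DPCover G (M + 2)) :
    (M + 2) * ((M + 1) * ∏ i, Efun (M + 2) (κ i)) ≤ dpCount C := by
  rw [glue_decomp S C]
  set P := ∏ i, Efun (M + 2) (κ i) with hP
  have hterm : ∀ a b : Fin (M + 2),
      P ≤ ∏ i, vec (fun e c d => C.H.Adj (w i e, c) (w i (e + 1), d)) a (t i) b := by
    intro a b
    apply Finset.prod_le_prod'
    intro i _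
    obtain ⟨hFr, hFl⟩ := glue_matching S C i
    rw [ht i]
    rw [ht i] at hFr hFl
    exact (vec_bound _ (κ i) hFr hFl a).1 b
  calc (M + 2) * ((M + 1) * P) = ∑ _a : Fin (M + 2), (M + 1) * P := by
        rw [Finset.sum_const, Finset.card_univ, Fintype.card_fin, smul_eq_mul]
    _ ≤ _ := by
        apply Finset.sum_le_sum
        intro a _
        have h1 : (M + 1) * P
            ≤ ∑ b, (if C.H.Adj (u, a) (v, b) then 0 else P) := by
          rw [sum_ite_zero_const]
          have hcard : (univ.filter (fun b : Fin (M + 2) => C.H.Adj (u, a) (v, b))).card ≤ 1 := by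
            apply Finset.card_le_one.mpr
            intro b hb b' hb'
            simp only [mem_filter] at hb hb'
            exact C.matching_right u v a b b' S.ne_uv hb.2 hb'.2
          have h2 : (univ.filter (fun b : Fin (M + 2) => C.H.Adj (u, a) (v, b))).card
              + (univ.filter (fun b : Fin (M + 2) => ¬ C.H.Adj (u, a) (v, b))).card
              = M + 2 := by
            rw [Finset.card_filter_add_card_filter_not]; simp
          have : M + 1 ≤ (univ.filter
              (fun b : Fin (M + 2) => ¬ C.H.Adj (u, a) (v, b))).card := by omega
          exact Nat.mul_le_mul_right _ this
        apply h1.trans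
        apply Finset.sum_le_sum
        intro b _
        by_cases hAdj : C.H.Adj (u, a) (v, b)
        · simp [hAdj]
        · simp only [if_neg hAdj]
          exact hterm a b

/-- The canonical cover: `H`-edges join equal colors across `G`-edges. -/
def canonicalCover (G : SimpleGraph W) (m : ℕ) : DPCover G m where
  H := { Adj := fun p q => (p.1 = q.1 ∧ p.2 ≠ q.2) ∨ (G.Adj p.1 q.1 ∧ p.2 = q.2)
         symm := by
           constructor
           rintro p q (⟨h1, h2⟩ | ⟨h1, h2⟩)
           · exact Or.inl ⟨h1.symm, h2.symm⟩
           · exact Or.inr ⟨h1.symm, h2.symm⟩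
         loopless := by
           constructor
           rintro p (⟨_, h⟩ | ⟨h, _⟩)
           · exact h rfl
           · exact G.loopless.irrefl _ h }
  part_complete := fun x a b hab => Or.inl ⟨rfl, hab⟩
  cross := by
    rintro x y a b hxy (⟨h1, _⟩ | ⟨h1, _⟩)
    · exact absurd h1 hxy
    · exact h1
  matching_right := by
    rintro x y a b b' hxy (⟨h1, _⟩ | ⟨_, h2⟩) (⟨h1', _⟩ | ⟨_, h2'⟩)
    · exact absurd h1 hxy
    · exact absurd h1 hxy
    · exact absurd h1' hxy
    · exact h2.symm.trans h2'
  matching_left := by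
    rintro x y a a' b hxy (⟨h1, _⟩ | ⟨_, h2⟩) (⟨h1', _⟩ | ⟨_, h2'⟩)
    · exact absurd h1 hxy
    · exact absurd h1 hxy
    · exact absurd h1' hxy
    · exact h2.trans h2'.symm

lemma canonical_count {M : ℕ} [Fintype W] [Fintype I] [Nonempty I]
    {κ : I → ℕ} (ht : ∀ i, t i = 2 * κ i) (S : GlueSetup G t u v w) :
    dpCount (canonicalCover G (M + 2)) = (M + 2) * ((M + 1) * ∏ i, Efun (M + 2) (κ i)) := by
  rw [glue_decomp S _]
  set P := ∏ i, Efun (M + 2) (κ i) with hP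
  have hAdjuv : ∀ a b : Fin (M + 2),
      (canonicalCover G (M + 2)).H.Adj (u, a) (v, b) ↔ a = b := by
    intro a b
    constructor
    · rintro (⟨h1, _⟩ | ⟨_, h2⟩)
      · exact absurd h1 S.ne_uv
      · exact h2
    · intro h; exact Or.inr ⟨S.adj_uv, h⟩
  have hterm : ∀ a b : Fin (M + 2), b ≠ a →
      (∏ i, vec (fun e c d => (canonicalCover G (M + 2)).H.Adj (w i e, c) (w i (e + 1), d))
        a (t i) b) = P := by
    intro a b hba
    apply Finset.prod_congr rfl
    intro i _
    have hid : ∀ e, e < t i → ∀ c d : Fin (M + 2),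
        ((canonicalCover G (M + 2)).H.Adj (w i e, c) (w i (e + 1), d) ↔ c = d) := by
      intro e he c d
      have hne : w i e ≠ w i (e + 1) := by
        intro hEq
        have := S.w_inj i e (e + 1) (by omega) (by omega) hEq
        omega
      have hadj : G.Adj (w i e) (w i (e + 1)) :=
        (S.adj_iff _ _).2 (Or.inr (Or.inr ⟨i, e, he, Or.inl ⟨rfl, rfl⟩⟩))
      constructor
      · rintro (⟨h1, _⟩ | ⟨_, h2⟩)
        · exact absurd h1 hne
        · exact h2
      · intro h; exact Or.inr ⟨hadj, h⟩
    rw [ht i]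
    rw [ht i] at hid
    rw [vec_id _ a (κ i) hid b, if_neg hba]
    omega
  have hsum : ∀ a : Fin (M + 2),
      (∑ b, if (canonicalCover G (M + 2)).H.Adj (u, a) (v, b) then 0
        else ∏ i, vec (fun e c d =>
          (canonicalCover G (M + 2)).H.Adj (w i e, c) (w i (e + 1), d)) a (t i) b)
      = (M + 1) * P := by
    intro a
    have : ∀ b : Fin (M + 2),
        (if (canonicalCover G (M + 2)).H.Adj (u, a) (v, b) then 0
          else ∏ i, vec (fun e c d =>
            (canonicalCover G (M + 2)).H.Adj (w i e, c) (w i (e + 1), d)) a (t i) b)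
        = if b = a then 0 else P := by
      intro b
      by_cases hba : b = a
      · rw [if_pos hba, if_pos ((hAdjuv a b).2 hba.symm)]
      · rw [if_neg hba, if_neg (fun h => hba (((hAdjuv a b).1 h).symm)), hterm a b hba]
    rw [Finset.sum_congr rfl (fun b _ => this b)]
    have h1 : ∑ b : Fin (M + 2), ((if b = a then 0 else P) + (if b = a then P else 0))
        = (M + 2) * P := by
      have : ∀ b : Fin (M + 2), ((if b = a then 0 else P) + (if b = a then P else 0)) = P := by
        intro b; by_cases hba : b = a <;> simp [hba]
      rw [Finset.sum_congr rfl (fun b _ => this b), Finset.sum_const, Finset.card_univ,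
        Fintype.card_fin, smul_eq_mul]
    rw [Finset.sum_add_distrib] at h1
    have h2 : ∑ b : Fin (M + 2), (if b = a then P else 0) = P := by
      rw [Finset.sum_ite_eq' univ a (fun _ => P)]
      simp
    rw [h2] at h1
    have h3 : (M + 2) * P = (M + 1) * P + P := by ring
    omega
  rw [Finset.sum_congr rfl (fun a _ => hsum a), Finset.sum_const, Finset.card_univ,
    Fintype.card_fin, smul_eq_mul]

theorem PDP_of_setup {M : ℕ} [Fintype W] [Fintype I] [Nonempty I]
    {κ : I → ℕ} (ht : ∀ i, t i = 2 * κ i) (S : GlueSetup G t u v w) :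
    PDP G (M + 2) = (M + 2) * ((M + 1) * ∏ i, Efun (M + 2) (κ i)) := by
  apply le_antisymm
  · exact Nat.sInf_le ⟨canonicalCover G (M + 2), canonical_count ht S⟩
  · have hmem : dpCount (canonicalCover G (M + 2))
        ∈ {n : ℕ | ∃ C : DPCover G (M + 2), dpCount C = n} :=
      ⟨canonicalCover G (M + 2), rfl⟩
    apply le_csInf ⟨_, hmem⟩
    rintro _ ⟨C, rfl⟩
    exact glue_lower ht S C

end Glue

section Cycle

open SimpleGraph

lemma mod_helper (n q : ℕ) (h1 : q < 2 * n) :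
    q % n = if q < n then q else q - n := by
  split
  · exact Nat.mod_eq_of_lt ‹_›
  · rw [Nat.mod_eq_sub_mod (by omega), Nat.mod_eq_of_lt (by omega)]

lemma fin_sub_val {n : ℕ} (a b : Fin (n + 1)) :
    (a - b).val = (a.val + ((n + 1) - b.val)) % (n + 1) := by
  rw [Fin.sub_def]
  show ((n + 1) - b.val + a.val) % (n + 1) = _
  rw [Nat.add_comm]

/-- Adjacency in an odd cycle, in terms of values. -/
lemma cyc_adj_iff {k : ℕ} (hk : 1 ≤ k) (x y : Fin (2 * k + 1)) :
    (cycleGraph (2 * k + 1)).Adj x y ↔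
      (x.val = y.val + 1 ∨ y.val = x.val + 1 ∨
        (x.val = 0 ∧ y.val = 2 * k) ∨ (y.val = 0 ∧ x.val = 2 * k)) := by
  rw [cycleGraph_adj']
  have hx := x.isLt
  have hy := y.isLt
  rw [fin_sub_val x y, fin_sub_val y x]
  rw [mod_helper _ _ (by omega), mod_helper _ _ (by omega)]
  split_ifs <;> omega

lemma cycle_glueSetup {k : ℕ} (hk : 1 ≤ k) :
    GlueSetup (cycleGraph (2 * k + 1)) (fun _ : PUnit => 2 * k) (0 : Fin (2 * k + 1))
      ((2 * k : ℕ) : Fin (2 * k + 1)) (fun _ e => (e : Fin (2 * k + 1))) := by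
  have hval : ∀ e : ℕ, e ≤ 2 * k → ((e : Fin (2 * k + 1))).val = e :=
    fun e he => Fin.val_cast_of_lt (by omega)
  constructor
  · intro _; exact Nat.cast_zero
  · intro _; rfl
  · intro _ e f he hf hEq
    have h1 := hval e he
    have h2 := hval f hf
    rw [hEq, h2] at h1
    omega
  · intro i j e f hij
    exact absurd (Subsingleton.elim i j) hij
  · intro x
    exact ⟨PUnit.unit, x.val, by omega, Fin.cast_val_eq_self x⟩
  · intro x y
    rw [cyc_adj_iff hk x y]
    constructor
    · rintro (h | h | ⟨h1, h2⟩ | ⟨h1, h2⟩)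
      · refine Or.inr (Or.inr ⟨PUnit.unit, y.val, by omega, Or.inr ⟨?_, ?_⟩⟩)
        · exact (Fin.cast_val_eq_self y).symm
        · rw [← h]; exact (Fin.cast_val_eq_self x).symm
      · refine Or.inr (Or.inr ⟨PUnit.unit, x.val, by omega, Or.inl ⟨?_, ?_⟩⟩)
        · exact (Fin.cast_val_eq_self x).symm
        · rw [← h]; exact (Fin.cast_val_eq_self y).symm
      · refine Or.inl ⟨Fin.ext (by simpa using h1), ?_⟩
        exact Fin.ext (by rw [hval (2 * k) le_rfl]; exact h2)
      · refine Or.inr (Or.inl ⟨?_, Fin.ext (by simpa using h1)⟩)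
        exact Fin.ext (by rw [hval (2 * k) le_rfl]; exact h2)
    · rintro (⟨rfl, rfl⟩ | ⟨rfl, rfl⟩ | ⟨i, e, he, ⟨rfl, rfl⟩ | ⟨rfl, rfl⟩⟩)
      · refine Or.inr (Or.inr (Or.inl ⟨by simp, hval (2 * k) le_rfl⟩))
      · refine Or.inr (Or.inr (Or.inr ⟨by simp, hval (2 * k) le_rfl⟩))
      · refine Or.inr (Or.inl ?_)
        rw [hval e (by omega), hval (e + 1) (by omega)]
      · refine Or.inl ?_
        rw [hval e (by omega), hval (e + 1) (by omega)]

lemma PDP_cycle {M k : ℕ} (hk : 1 ≤ k) :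
    PDP (cycleGraph (2 * k + 1)) (M + 2) = (M + 2) * ((M + 1) * Efun (M + 2) k) := by
  have h := PDP_of_setup (M := M) (κ := fun _ : PUnit => k) (fun _ => rfl) (cycle_glueSetup hk)
  rw [h]
  simp

end Cycle

section EdgePath

open SimpleGraph

/-- The walk around the odd cycle starting at `u0`, moving away from `u1`. -/
def pth {n : ℕ} (u0 u1 : Fin (n + 1)) (e : ℕ) : Fin (n + 1) :=
  u0 + (e : Fin (n + 1)) * (u0 - u1)

lemma edge_path {k : ℕ} (hk : 1 ≤ k) (u0 u1 : Fin (2 * k + 1))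
    (hadj : (cycleGraph (2 * k + 1)).Adj u0 u1) :
    (pth u0 u1 0 = u0) ∧ (pth u0 u1 (2 * k) = u1) ∧
    (∀ e f, e ≤ 2 * k → f ≤ 2 * k → pth u0 u1 e = pth u0 u1 f → e = f) ∧
    (∀ z, ∃ e, e ≤ 2 * k ∧ pth u0 u1 e = z) ∧
    (∀ e f, e ≤ 2 * k → f ≤ 2 * k → ((cycleGraph (2 * k + 1)).Adj (pth u0 u1 e) (pth u0 u1 f) ↔
      (e = f + 1 ∨ f = e + 1 ∨ (e = 0 ∧ f = 2 * k) ∨ (f = 0 ∧ e = 2 * k)))) := by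
  have hval : ∀ e : ℕ, e ≤ 2 * k → ((e : Fin (2 * k + 1))).val = e :=
    fun e he => Fin.val_cast_of_lt (by omega)
  have hval1 : ((1 : Fin (2 * k + 1))).val = 1 := by
    rw [show (1 : Fin (2 * k + 1)) = ((1 : ℕ) : Fin (2 * k + 1)) by rw [Nat.cast_one]]
    exact hval 1 (by omega)
  have hδ : u0 - u1 = 1 ∨ u0 - u1 = -1 := by
    rcases cycleGraph_adj'.1 hadj with h | h
    · left
      exact Fin.ext (by rw [h, hval1])
    · right
      have : u1 - u0 = 1 := Fin.ext (by rw [h, hval1])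
      rw [← this]
      ring
  have hδ2 : (u0 - u1) * (u0 - u1) = 1 := by
    rcases hδ with h | h <;> rw [h] <;> ring
  have hcast2k : ((2 * k : ℕ) : Fin (2 * k + 1)) = -1 := by
    have h0 : ((2 * k + 1 : ℕ) : Fin (2 * k + 1)) = 0 := Fin.natCast_self _
    rw [Nat.cast_add, Nat.cast_one] at h0
    linear_combination h0
  have hP1 : pth u0 u1 0 = u0 := by simp [pth]
  have hP2 : pth u0 u1 (2 * k) = u1 := by
    show u0 + ((2 * k : ℕ) : Fin (2 * k + 1)) * (u0 - u1) = u1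
    rw [hcast2k]
    ring
  have hP3 : ∀ e f, e ≤ 2 * k → f ≤ 2 * k → pth u0 u1 e = pth u0 u1 f → e = f := by
    intro e f he hf hEq
    have h1 : (e : Fin (2 * k + 1)) * (u0 - u1) = (f : Fin (2 * k + 1)) * (u0 - u1) :=
      add_left_cancel hEq
    have h2 : (e : Fin (2 * k + 1)) * ((u0 - u1) * (u0 - u1))
        = (f : Fin (2 * k + 1)) * ((u0 - u1) * (u0 - u1)) := by
      rw [← mul_assoc, ← mul_assoc, h1]
    rw [hδ2, mul_one, mul_one] at h2
    have := hval e he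
    rw [h2, hval f hf] at this
    omega
  have hP4 : ∀ z, ∃ e, e ≤ 2 * k ∧ pth u0 u1 e = z := by
    intro z
    refine ⟨((z - u0) * (u0 - u1)).val, Nat.lt_succ_iff.mp (Fin.is_lt _), ?_⟩
    show u0 + ((((z - u0) * (u0 - u1)).val : ℕ) : Fin (2 * k + 1)) * (u0 - u1) = z
    rw [Fin.cast_val_eq_self]
    rw [mul_assoc, hδ2]
    ring
  refine ⟨hP1, hP2, hP3, hP4, ?_⟩
  intro e f he hf
  have hsub1 : pth u0 u1 e - pth u0 u1 f
      = ((e : Fin (2 * k + 1)) - (f : Fin (2 * k + 1))) * (u0 - u1) := by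
    show u0 + (e : Fin (2 * k + 1)) * (u0 - u1) - (u0 + (f : Fin (2 * k + 1)) * (u0 - u1)) = _
    ring
  have hsub2 : pth u0 u1 f - pth u0 u1 e
      = ((f : Fin (2 * k + 1)) - (e : Fin (2 * k + 1))) * (u0 - u1) := by
    show u0 + (f : Fin (2 * k + 1)) * (u0 - u1) - (u0 + (e : Fin (2 * k + 1)) * (u0 - u1)) = _
    ring
  have hred : (cycleGraph (2 * k + 1)).Adj (pth u0 u1 e) (pth u0 u1 f) ↔
      (cycleGraph (2 * k + 1)).Adj (e : Fin (2 * k + 1)) (f : Fin (2 * k + 1)) := by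
    rw [cycleGraph_adj', cycleGraph_adj', hsub1, hsub2]
    rcases hδ with h | h
    · rw [h, mul_one, mul_one]
    · rw [h, mul_neg_one, mul_neg_one, neg_sub, neg_sub]
      exact or_comm
  rw [hred, cyc_adj_iff hk, hval e he, hval f hf]

end EdgePath

theorem PDP_oddCycle_edgeGluing {n m : ℕ} (hn : 2 ≤ n) (hm : 2 ≤ m)
    (k : Fin n → ℕ) (hk : ∀ i, 1 ≤ k i)
    {W : Type} [Fintype W]
    (uv : ∀ i : Fin n, Fin 2 → Fin (2 * k i + 1))
    (hedge : ∀ i, (SimpleGraph.cycleGraph (2 * k i + 1)).Adj (uv i 0) (uv i 1))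
    (G : SimpleGraph W) (φ : ∀ i : Fin n, Fin (2 * k i + 1) → W)
    (h : IsCliqueGluing (fun i => SimpleGraph.cycleGraph (2 * k i + 1)) uv G φ) :
    PDP G m * (m * (m - 1)) ^ (n - 1) =
      ∏ i : Fin n, PDP (SimpleGraph.cycleGraph (2 * k i + 1)) m := by
  obtain ⟨M, rfl⟩ : ∃ M, m = M + 2 := ⟨m - 2, by omega⟩
  haveI : Nonempty (Fin n) := ⟨⟨0, by omega⟩⟩
  have i₀ : Fin n := ⟨0, by omega⟩
  have hP := fun i => edge_path (hk i) (uv i 0) (uv i 1) (hedge i)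
  have hP1 : ∀ i, pth (uv i 0) (uv i 1) 0 = uv i 0 := fun i => (hP i).1
  have hP2 : ∀ i, pth (uv i 0) (uv i 1) (2 * k i) = uv i 1 := fun i => (hP i).2.1
  have hP3 : ∀ i e f, e ≤ 2 * k i → f ≤ 2 * k i →
      pth (uv i 0) (uv i 1) e = pth (uv i 0) (uv i 1) f → e = f := fun i => (hP i).2.2.1
  have hP4 : ∀ i z, ∃ e, e ≤ 2 * k i ∧ pth (uv i 0) (uv i 1) e = z :=
    fun i => (hP i).2.2.2.1
  have hP5 := fun i => (hP i).2.2.2.2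
  have hq01 : ∀ (i : Fin n) (q : Fin 2) (z : Fin (2 * k i + 1)),
      z = uv i q → z = uv i 0 ∨ z = uv i 1 := by
    intro i q z hz
    fin_cases q
    · exact Or.inl hz
    · exact Or.inr hz
  have hUi : ∀ i, φ i (uv i 0) = φ i₀ (uv i₀ 0) := fun i => h.glue i i₀ 0
  have hVi : ∀ i, φ i (uv i 1) = φ i₀ (uv i₀ 1) := fun i => h.glue i i₀ 1
  have hGadjUV : G.Adj (φ i₀ (uv i₀ 0)) (φ i₀ (uv i₀ 1)) := (h.embed i₀ _ _).2 (hedge i₀)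
  have hUV : φ i₀ (uv i₀ 0) ≠ φ i₀ (uv i₀ 1) := hGadjUV.ne
  have hend0 : ∀ i e, e ≤ 2 * k i → pth (uv i 0) (uv i 1) e = uv i 0 → e = 0 := by
    intro i e he hz
    exact hP3 i e 0 he (by omega) (by rw [hz, hP1 i])
  have hend1 : ∀ i e, e ≤ 2 * k i → pth (uv i 0) (uv i 1) e = uv i 1 → e = 2 * k i := by
    intro i e he hz
    exact hP3 i e (2 * k i) he le_rfl (by rw [hz, hP2 i])
  have S : GlueSetup G (fun i => 2 * k i) (φ i₀ (uv i₀ 0)) (φ i₀ (uv i₀ 1))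
      (fun i e => φ i (pth (uv i 0) (uv i 1) e)) := by
    constructor
    · intro i; rw [hP1 i]; exact hUi i
    · intro i; rw [hP2 i]; exact hVi i
    · intro i e f he hf hEq
      exact hP3 i e f he hf (h.phi_inj i hEq)
    · intro i j e f hij he hf hEq
      obtain ⟨q, hq⟩ := h.inter i j _ _ hij hEq
      obtain ⟨q', hq'⟩ := h.inter j i _ _ (Ne.symm hij) hEq.symm
      rcases hq01 i q _ hq with hzi | hzi <;> rcases hq01 j q' _ hq' with hzj | hzj
      · exact Or.inl ⟨hend0 i e he hzi, hend0 j f hf hzj⟩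
      · exfalso
        apply hUV
        calc φ i₀ (uv i₀ 0) = φ i (uv i 0) := (hUi i).symm
          _ = φ i (pth (uv i 0) (uv i 1) e) := by rw [hzi]
          _ = φ j (pth (uv j 0) (uv j 1) f) := hEq
          _ = φ j (uv j 1) := by rw [hzj]
          _ = φ i₀ (uv i₀ 1) := hVi j
      · exfalso
        apply hUV
        calc φ i₀ (uv i₀ 0) = φ j (uv j 0) := (hUi j).symm
          _ = φ j (pth (uv j 0) (uv j 1) f) := by rw [hzj]
          _ = φ i (pth (uv i 0) (uv i 1) e) := hEq.symm
          _ = φ i (uv i 1) := by rw [hzi]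
          _ = φ i₀ (uv i₀ 1) := hVi i
      · exact Or.inr ⟨hend1 i e he hzi, hend1 j f hf hzj⟩
    · intro x
      obtain ⟨i, z, hz⟩ := h.covers x
      obtain ⟨e, he, hpe⟩ := hP4 i z
      exact ⟨i, e, he, by rw [hpe, hz]⟩
    · intro x y
      constructor
      · intro hadj
        obtain ⟨i, z, hz⟩ := h.covers x
        obtain ⟨j, z', hz'⟩ := h.covers y
        subst hz
        subst hz'
        by_cases hij : i = j
        · subst hij
          have hcyc := (h.embed i z z').1 hadj
          obtain ⟨e, he, hpe⟩ := hP4 i z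
          obtain ⟨f, hf, hpf⟩ := hP4 i z'
          subst hpe
          subst hpf
          rcases (hP5 i e f he hf).1 hcyc with h1 | h1 | ⟨h1, h2⟩ | ⟨h1, h2⟩
          · exact Or.inr (Or.inr ⟨i, f, by omega, Or.inr ⟨rfl, by rw [h1]⟩⟩)
          · exact Or.inr (Or.inr ⟨i, e, by omega, Or.inl ⟨rfl, by rw [h1]⟩⟩)
          · refine Or.inl ⟨?_, ?_⟩
            · rw [h1, hP1 i]; exact hUi i
            · rw [h2, hP2 i]; exact hVi i
          · refine Or.inr (Or.inl ⟨?_, ?_⟩)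
            · rw [h2, hP2 i]; exact hVi i
            · rw [h1, hP1 i]; exact hUi i
        · obtain ⟨⟨q, hq⟩, ⟨q', hq'⟩⟩ := h.no_extra i j z z' hij hadj
          have hxy : φ i z ≠ φ j z' := hadj.ne
          rcases hq01 i q z hq with hz0 | hz1 <;> rcases hq01 j q' z' hq' with hz0' | hz1'
          · exact absurd (by rw [hz0, hz0', hUi i, hUi j]) hxy
          · exact Or.inl ⟨by rw [hz0]; exact hUi i, by rw [hz1']; exact hVi j⟩
          · exact Or.inr (Or.inl ⟨by rw [hz1]; exact hVi i, by rw [hz0']; exact hUi j⟩)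
          · exact absurd (by rw [hz1, hz1', hVi i, hVi j]) hxy
      · rintro (⟨hx, hy⟩ | ⟨hx, hy⟩ | ⟨i, e, he, ⟨hx, hy⟩ | ⟨hy, hx⟩⟩)
        · rw [hx, hy]; exact hGadjUV
        · rw [hx, hy]; exact hGadjUV.symm
        · rw [hx, hy]
          exact (h.embed i _ _).2 ((hP5 i e (e + 1) (by omega) he).2 (Or.inr (Or.inl rfl)))
        · rw [hx, hy]
          exact ((h.embed i _ _).2
            ((hP5 i e (e + 1) (by omega) he).2 (Or.inr (Or.inl rfl)))).symm
  have hmain := PDP_of_setup (M := M) (κ := k) (fun i => rfl) S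
  rw [hmain]
  rw [Finset.prod_congr rfl (fun i _ => PDP_cycle (M := M) (hk i))]
  rw [show (M + 2) - 1 = M + 1 from rfl]
  have hprod : (∏ i : Fin n, ((M + 2) * ((M + 1) * Efun (M + 2) (k i))))
      = ((M + 2) * (M + 1)) ^ n * ∏ i : Fin n, Efun (M + 2) (k i) := by
    rw [Finset.prod_congr rfl
      (fun (i : Fin n) _ => show (M + 2) * ((M + 1) * Efun (M + 2) (k i))
        = ((M + 2) * (M + 1)) * Efun (M + 2) (k i) by ring)]
    rw [Finset.prod_mul_distrib, Finset.prod_const, Finset.card_univ, Fintype.card_fin]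
  rw [hprod]
  have hn1 : n - 1 + 1 = n := by omega
  calc (M + 2) * ((M + 1) * ∏ i : Fin n, Efun (M + 2) (k i))
        * ((M + 2) * (M + 1)) ^ (n - 1)
      = ((M + 2) * (M + 1)) ^ (n - 1 + 1) * ∏ i : Fin n, Efun (M + 2) (k i) := by ring
    _ = _ := by rw [hn1]
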